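/- Let ρ : ℝ → ℝ be continuous with 0 ≤ ρ(t) for all t and ∫_ℝ ρ(t) dt = 1. Let l < u be real numbers and μ > 0, and define g : ℝ → ℝ by g(s) = ∫_ℝ mid{l, u, s − μt}·ρ(t) dt. Then g is differentiable at every s ∈ ℝ with derivative g'(s) = ∫_{(s−u)/μ}^{(s−l)/μ} ρ(t) dt. -/

import Mathlib

open MeasureTheory Set Metric

/-- Differentiability of the smoothed median (clamp): with `mid{l,u,c} = min (max l c) u`
(the clamp of `c` to `[l,u]`), the function `g(s) = ∫ mid{l, u, s - μt} ρ(t) dt` is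
differentiable with `g'(s) = ∫_{(s-u)/μ}^{(s-l)/μ} ρ(t) dt`. -/
theorem stmt_12 (ρ : ℝ → ℝ) (hcont : Continuous ρ) (hnn : ∀ t, 0 ≤ ρ t)
    (hint : (∫ t : ℝ, ρ t) = 1) (l u μ : ℝ) (hlu : l < u) (hμ : 0 < μ) :
    ∀ s : ℝ,
      HasDerivAt (fun s' : ℝ => ∫ t : ℝ, min (max l (s' - μ * t)) u * ρ t)
        (∫ t in ((s - u) / μ)..((s - l) / μ), ρ t) s := by
  intro s
  have hρ_int : Integrable ρ := by
    by_contra h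
    rw [integral_undef h] at hint
    norm_num at hint
  set a := (s - u) / μ with ha
  set b := (s - l) / μ with hb
  have hab : a < b := by
    rw [ha, hb, div_lt_div_iff_of_pos_right hμ]
    linarith
  set F : ℝ → ℝ → ℝ := fun x t => min (max l (x - μ * t)) u * ρ t with hF
  set F' : ℝ → ℝ := fun t => Set.indicator (Set.Ioo a b) ρ t with hF'
  have hclamp : ∀ c d : ℝ, |min (max l c) u - min (max l d) u| ≤ |c - d| := by
    intro c d
    calc |min (max l c) u - min (max l d) u| ≤ max |max l c - max l d| |u - u| :=
          abs_min_sub_min_le_max _ _ _ _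
      _ ≤ max (max |l - l| |c - d|) |u - u| :=
          max_le_max (abs_max_sub_max_le_max _ _ _ _) le_rfl
      _ = |c - d| := by
          simp only [sub_self, abs_zero]
          rw [max_eq_left (le_max_left 0 |c - d|), max_eq_right (abs_nonneg _)]
  have hbdd : ∀ c : ℝ, |min (max l c) u| ≤ max |l| |u| := by
    intro c
    have h1 : l ≤ min (max l c) u := le_min (le_max_left _ _) hlu.le
    have h2 : min (max l c) u ≤ u := min_le_right _ _
    rw [abs_le]
    constructor
    · nlinarith [neg_abs_le l, le_max_left |l| |u|]
    · nlinarith [le_abs_self u, le_max_right |l| |u|]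
  have key := hasDerivAt_integral_of_dominated_loc_of_lip (F := F) (F' := F') (x₀ := s)
      (bound := ρ) (s := ball s 1) (ball_mem_nhds s zero_lt_one)
      (Filter.Eventually.of_forall fun x =>
        (Continuous.aestronglyMeasurable (by fun_prop)))
      ?_ ?_ ?_ hρ_int ?_
  · have hIoo : (∫ t, F' t) = ∫ t in a..b, ρ t := by
      rw [hF', integral_indicator measurableSet_Ioo,
        intervalIntegral.integral_of_le hab.le, integral_Ioc_eq_integral_Ioo]
    rw [← hIoo]
    exact key.2
  · apply Integrable.bdd_mul (c := max |l| |u|) hρ_int (Continuous.aestronglyMeasurable (by fun_prop))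
    exact Filter.Eventually.of_forall fun t => by simpa using hbdd (s - μ * t)
  · exact (hcont.aestronglyMeasurable).indicator measurableSet_Ioo
  · refine Filter.Eventually.of_forall fun t => LipschitzWith.lipschitzOnWith ?_
    apply LipschitzWith.of_dist_le_mul
    intro x y
    simp only [hF, Real.dist_eq]
    rw [← sub_mul, abs_mul, Real.coe_nnabs]
    rw [mul_comm (|ρ t|)]
    have heq : |(x - μ * t) - (y - μ * t)| = |x - y| := by congr 1; ring
    exact mul_le_mul_of_nonneg_right ((hclamp _ _).trans_eq heq) (abs_nonneg _)
  · have hnull : (volume : Measure ℝ) {a, b} = 0 := by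
      exact ((Set.finite_singleton b).insert a).measure_zero volume
    filter_upwards [compl_mem_ae_iff.mpr hnull] with t ht
    simp only [mem_compl_iff, mem_insert_iff, mem_singleton_iff, not_or] at ht
    obtain ⟨hta, htb⟩ := ht
    have hcont2 : Continuous fun x : ℝ => x - μ * t := by fun_prop
    rcases lt_trichotomy t a with h | h | h
    · -- t < a : u < s - μ t, locally clamp = u
      have h1 : u < s - μ * t := by
        rw [ha, lt_div_iff₀ hμ] at h
        nlinarith
      have hz : F' t = 0 := by
        show (Ioo a b).indicator ρ t = 0
        exact indicator_of_notMem (by simp [mem_Ioo, not_and_or, not_lt.mpr h.le]) _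
      rw [hz]
      have hev : (fun x => F x t) =ᶠ[nhds s] fun _ => u * ρ t := by
        have : ∀ᶠ x in nhds s, u < x - μ * t :=
          hcont2.continuousAt.eventually (p := fun y => u < y) (eventually_gt_nhds h1)
        filter_upwards [this] with x hx
        simp only [hF]
        rw [min_eq_right (le_max_of_le_right hx.le)]
      exact (hasDerivAt_const s (u * ρ t)).congr_of_eventuallyEq hev
    · exact absurd h hta
    · rcases lt_trichotomy t b with h2 | h2 | h2
      · -- a < t < b : l < s - μ t < u
        have h1 : s - μ * t < u := by
          rw [ha, div_lt_iff₀ hμ] at h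
          nlinarith
        have h3 : l < s - μ * t := by
          rw [hb, lt_div_iff₀ hμ] at h2
          nlinarith
        have hz : F' t = ρ t := by
          show (Ioo a b).indicator ρ t = ρ t
          exact indicator_of_mem (mem_Ioo.mpr ⟨h, h2⟩) ρ
        rw [hz]
        have hev : (fun x => F x t) =ᶠ[nhds s] fun x => (x - μ * t) * ρ t := by
          have e1 : ∀ᶠ x in nhds s, x - μ * t < u :=
            hcont2.continuousAt.eventually (p := fun y => y < u) (eventually_lt_nhds h1)
          have e2 : ∀ᶠ x in nhds s, l < x - μ * t :=
            hcont2.continuousAt.eventually (p := fun y => l < y) (eventually_gt_nhds h3)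
          filter_upwards [e1, e2] with x hx1 hx2
          simp only [hF]
          rw [max_eq_right hx2.le, min_eq_left hx1.le]
        have hd : HasDerivAt (fun x : ℝ => (x - μ * t) * ρ t) (ρ t) s := by
          simpa using ((hasDerivAt_id s).sub_const (μ * t)).mul_const (ρ t)
        exact hd.congr_of_eventuallyEq hev
      · exact absurd h2 htb
      · -- t > b : s - μ t < l, locally clamp = l
        have h1 : s - μ * t < l := by
          rw [hb, div_lt_iff₀ hμ] at h2
          nlinarith
        have hz : F' t = 0 := by
          show (Ioo a b).indicator ρ t = 0
          exact indicator_of_notMem (by simp [mem_Ioo, not_and_or, not_lt.mpr h2.le]) _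
        rw [hz]
        have hev : (fun x => F x t) =ᶠ[nhds s] fun _ => l * ρ t := by
          have : ∀ᶠ x in nhds s, x - μ * t < l :=
            hcont2.continuousAt.eventually (p := fun y => y < l) (eventually_lt_nhds h1)
          filter_upwards [this] with x hx
          simp only [hF]
          rw [max_eq_left hx.le, min_eq_left hlu.le]
        exact (hasDerivAt_const s (l * ρ t)).congr_of_eventuallyEq hev
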